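/- Let y be a nonnegative function on a relation R contained in S x T, where S = {s_1,...,s_m} and T = {t_1,...,t_p} are sorted lists, and suppose R is 'staircase-shaped': there is a function D such that (s_i, t_j) in R iff ell(s_i) + ell'(t_j) <= D, where ell and ell' are nondecreasing in the indices. Let gamma = sum over R of y. Define mu_S as the least k such that the total y-mass of pairs whose first coordinate is among s_1,...,s_k is at least gamma/2, and define mu_T symmetrically. Then every pair (s_i, t_j) with i <= mu_S and j <= mu_T belongs to R. -/

import Mathlib

/-- In a staircase-shaped relation `R = {(i,j) : ℓ(i) + ℓ'(j) ≤ D}` with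
nonnegative weights `y` supported on `R` of total mass `γ`, if `μS` and `μT`
are the median prefix indices (least prefix lengths whose mass reaches `γ/2`),
then every pair with first index below `μS` and second index below `μT`
belongs to `R`. -/
theorem stmt_4 (m p : ℕ) (ell : Fin m → ℕ) (ell' : Fin p → ℕ)
    (hell : Monotone ell) (hell' : Monotone ell') (D : ℕ)
    (y : Fin m → Fin p → ℝ) (hy : ∀ i j, 0 ≤ y i j)
    (hsupp : ∀ i j, ¬ (ell i + ell' j ≤ D) → y i j = 0)
    (γ : ℝ) (hγ : γ = ∑ i, ∑ j, y i j) (hpos : 0 < γ)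
    (μS μT : ℕ)
    (hμS : μS = sInf {k : ℕ | γ / 2 ≤ ∑ i ∈ Finset.univ.filter (fun i : Fin m => i.val + 1 ≤ k), ∑ j, y i j})
    (hμT : μT = sInf {k : ℕ | γ / 2 ≤ ∑ j ∈ Finset.univ.filter (fun j : Fin p => j.val + 1 ≤ k), ∑ i, y i j}) :
    ∀ i : Fin m, ∀ j : Fin p, i.val < μS → j.val < μT → ell i + ell' j ≤ D := by
  intro i j hi hj
  by_contra h
  -- zero lemma
  have hzero : ∀ i' : Fin m, ∀ j' : Fin p, i ≤ i' → j ≤ j' → y i' j' = 0 := by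
    intro i' j' hii hjj
    apply hsupp
    intro hle
    exact h (le_trans (add_le_add (hell hii) (hell' hjj)) hle)
  set A := ∑ i' ∈ Finset.univ.filter (fun i' : Fin m => i'.val + 1 ≤ i.val), ∑ j', y i' j' with hAdef
  set B := ∑ j' ∈ Finset.univ.filter (fun j' : Fin p => j'.val + 1 ≤ j.val), ∑ i', y i' j' with hBdef
  have hA : A < γ / 2 := by
    by_contra hA
    push_neg at hA
    have : μS ≤ i.val := hμS ▸ Nat.sInf_le hA
    omega
  have hB : B < γ / 2 := by
    by_contra hB
    push_neg at hB
    have : μT ≤ j.val := hμT ▸ Nat.sInf_le hB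
    omega
  have hsplit : γ ≤ A + B := by
    rw [hγ, ← Finset.sum_filter_add_sum_filter_not Finset.univ
      (fun i' : Fin m => i'.val + 1 ≤ i.val) (fun i' => ∑ j', y i' j')]
    apply add_le_add_right
    calc ∑ i' ∈ Finset.univ.filter (fun i' : Fin m => ¬ (i'.val + 1 ≤ i.val)), ∑ j', y i' j'
        = ∑ i' ∈ Finset.univ.filter (fun i' : Fin m => ¬ (i'.val + 1 ≤ i.val)),
            ∑ j' ∈ Finset.univ.filter (fun j' : Fin p => j'.val + 1 ≤ j.val), y i' j' := by
          apply Finset.sum_congr rfl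
          intro i' hi'
          simp only [Finset.mem_filter, Finset.mem_univ, true_and] at hi'
          rw [← Finset.sum_filter_add_sum_filter_not Finset.univ
            (fun j' : Fin p => j'.val + 1 ≤ j.val) (fun j' => y i' j')]
          have : ∑ j' ∈ Finset.univ.filter (fun j' : Fin p => ¬ (j'.val + 1 ≤ j.val)), y i' j' = 0 := by
            apply Finset.sum_eq_zero
            intro j' hj'
            simp only [Finset.mem_filter, Finset.mem_univ, true_and] at hj'
            exact hzero i' j' (by omega) (by omega)
          rw [this, add_zero]
      _ ≤ ∑ i' : Fin m, ∑ j' ∈ Finset.univ.filter (fun j' : Fin p => j'.val + 1 ≤ j.val), y i' j' := by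
          apply Finset.sum_le_sum_of_subset_of_nonneg (Finset.filter_subset _ _)
          intro i' _ _
          exact Finset.sum_nonneg fun j' _ => hy i' j'
      _ = B := by rw [hBdef, Finset.sum_comm]
  linarith
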